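/- arXiv:1806.09567 — 3 statements merged into one kernel-verified Lean document; each statement's English description precedes it below -/
import Mathlib

section
/- Let R be a commutative ring, B an R-module, and x₁,…,x_d ∈ R a regular sequence on B. Then for every integer t ≥ 1, the element (x₁x₂⋯x_d)^{t−1} does not lie in the submodule (x₁^t,…,x_d^t)B. Equivalently, the Čech/local cohomology class [1/(x₁⋯x_d)] is nonzero in the top local cohomology of B with respect to (x₁,…,x_d). -/
namespace PowProdAux

open Ideal

variable {B : Type*} [CommRing B]

/-- `l` is a weakly regular sequence on `B` relative to the base ideal `J`. -/
inductive WR : Ideal B → List B → Prop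
  | nil (J : Ideal B) : WR J []
  | cons {J : Ideal B} {a : B} {l : List B}
      (hhead : ∀ b, a * b ∈ J → b ∈ J)
      (htail : WR (J ⊔ Ideal.span {a}) l) : WR J (a :: l)

lemma WR.head {J : Ideal B} {a : B} {l : List B} (h : WR J (a :: l)) :
    ∀ b, a * b ∈ J → b ∈ J := by cases h with | cons h1 h2 => exact h1

lemma WR.tail {J : Ideal B} {a : B} {l : List B} (h : WR J (a :: l)) :
    WR (J ⊔ Ideal.span {a}) l := by cases h with | cons h1 h2 => exact h2

lemma wr_top : ∀ l : List B, WR ⊤ l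
  | [] => WR.nil ⊤
  | _ :: l => WR.cons (fun _ _ => Submodule.mem_top)
      (by rw [top_sup_eq]; exact wr_top l)

lemma wr_stage : ∀ (l₁ : List B) {J : Ideal B} {e : B} (l₂ : List B),
    WR J (l₁ ++ e :: l₂) → ∀ b, e * b ∈ J ⊔ Ideal.ofList l₁ → b ∈ J ⊔ Ideal.ofList l₁
  | [], J, e, l₂, h, b, hb => by
      rw [ofList_nil, sup_bot_eq] at hb ⊢
      exact h.head b hb
  | a :: l₁, J, e, l₂, h, b, hb => by
      rw [ofList_cons, ← sup_assoc] at hb ⊢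
      exact wr_stage l₁ l₂ h.tail b hb

lemma wr_of_stages : ∀ (l : List B) {J : Ideal B},
    (∀ l₁ e l₂, l = l₁ ++ e :: l₂ → ∀ b, e * b ∈ J ⊔ Ideal.ofList l₁ → b ∈ J ⊔ Ideal.ofList l₁) →
    WR J l
  | [], J, _ => WR.nil J
  | a :: l, J, h => by
      refine WR.cons (fun b hb => ?_) (wr_of_stages l fun l₁ e l₂ hl b hb => ?_)
      · have := h [] a l rfl b (by rwa [ofList_nil, sup_bot_eq])
        rwa [ofList_nil, sup_bot_eq] at this
      · have := h (a :: l₁) e l₂ (by rw [hl]; rfl) b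
          (by rwa [ofList_cons, ← sup_assoc])
        rwa [ofList_cons, ← sup_assoc] at this

lemma wr_append_left : ∀ (l₁ : List B) {l₂ : List B} {J : Ideal B},
    WR J (l₁ ++ l₂) → WR J l₁
  | [], _, J, _ => WR.nil J
  | _ :: l₁, _, _, h => WR.cons h.head (wr_append_left l₁ h.tail)

lemma wr_cancel_head (a : B) (l : List B) : ∀ (J : Ideal B), WR J (a :: l) →
    ∀ m, a * m ∈ J ⊔ Ideal.ofList l → m ∈ J ⊔ Ideal.ofList l := by
  induction l using List.reverseRecOn with
  | nil =>
    intro J h m hm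
    rw [ofList_nil, sup_bot_eq] at hm ⊢
    exact h.head m hm
  | append_singleton l' c ih =>
    intro J h m hm
    have hKa : ∀ z : B, J ⊔ Ideal.ofList (z :: l') =
        (J ⊔ Ideal.ofList l') ⊔ Ideal.span {z} := fun z => by
      rw [ofList_cons, sup_comm (Ideal.span {z}) (Ideal.ofList l'), ← sup_assoc]
    rw [ofList_append, ofList_singleton, ← sup_assoc] at hm
    obtain ⟨w, hw, nc, hnc, hsum⟩ := Submodule.mem_sup.mp hm
    obtain ⟨n, rfl⟩ := Ideal.mem_span_singleton'.mp hnc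
    -- hsum : w + n * c = a * m
    have h' : WR J ((a :: l') ++ c :: []) := h
    have hcn : c * n ∈ J ⊔ Ideal.ofList (a :: l') := by
      rw [hKa]
      have : c * n = a * m - w := by linear_combination hsum
      rw [this]
      exact sub_mem (Submodule.mem_sup_right (Ideal.mem_span_singleton'.mpr ⟨m, mul_comm m a⟩))
        (Submodule.mem_sup_left hw)
    have hn := wr_stage (a :: l') [] h' n hcn
    rw [hKa] at hn
    obtain ⟨w', hw', nd, hnd, hsum'⟩ := Submodule.mem_sup.mp hn
    obtain ⟨dd, rfl⟩ := Ideal.mem_span_singleton'.mp hnd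
    -- hsum' : w' + dd * a = n
    have key : a * (m - c * dd) ∈ J ⊔ Ideal.ofList l' := by
      have : a * (m - c * dd) = w + c * w' := by linear_combination -hsum - c * hsum'
      rw [this]
      exact add_mem hw ((J ⊔ Ideal.ofList l').mul_mem_left c hw')
    have hpre : WR J (a :: l') := wr_append_left (a :: l') h'
    have hmc := ih J hpre (m - c * dd) key
    rw [ofList_append, ofList_singleton, ← sup_assoc]
    have : m = (m - c * dd) + dd * c := by ring
    rw [this]
    exact add_mem (Submodule.mem_sup_left hmc)
      (Submodule.mem_sup_right (Ideal.mem_span_singleton'.mpr ⟨dd, rfl⟩))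

lemma wr_cancel_head_pow (a : B) (l : List B) (J : Ideal B) (h : WR J (a :: l)) :
    ∀ (s : ℕ) (m : B), a ^ s * m ∈ J ⊔ Ideal.ofList l → m ∈ J ⊔ Ideal.ofList l
  | 0, m, hm => by rwa [pow_zero, one_mul] at hm
  | s + 1, m, hm => by
      rw [pow_succ', mul_assoc] at hm
      exact wr_cancel_head_pow a l J h s m (wr_cancel_head a l J h _ hm)

lemma wr_head_pow_reg {a : B} {l : List B} {J : Ideal B} (h : WR J (a :: l)) :
    ∀ (s : ℕ) (b : B), a ^ s * b ∈ J → b ∈ J := by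
  intro s b hb
  have h1 : WR J (a :: ([] : List B)) := WR.cons h.head (WR.nil _)
  have := wr_cancel_head_pow a [] J h1 s b (by rwa [ofList_nil, sup_bot_eq])
  rwa [ofList_nil, sup_bot_eq] at this

lemma wr_head_pow {a : B} {l : List B} {J : Ideal B} (h : WR J (a :: l)) :
    ∀ t : ℕ, WR J (a ^ t :: l)
  | 0 => by
      rw [pow_zero]
      exact WR.cons (fun b hb => by rwa [one_mul] at hb)
        (by rw [Ideal.span_singleton_one, sup_top_eq]; exact wr_top l)
  | t + 1 => by
      have h' := wr_head_pow h t
      apply wr_of_stages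
      intro l₁ e l₂ hl b hb
      cases l₁ with
      | nil =>
        simp only [List.nil_append, List.cons.injEq] at hl
        obtain ⟨rfl, rfl⟩ := hl
        rw [ofList_nil, sup_bot_eq] at hb ⊢
        exact wr_head_pow_reg h (t + 1) b hb
      | cons a' l₁ =>
        simp only [List.cons_append, List.cons.injEq] at hl
        obtain ⟨rfl, rfl⟩ := hl
        have hKa : ∀ z : B, J ⊔ Ideal.ofList (z :: l₁) =
            (J ⊔ Ideal.ofList l₁) ⊔ Ideal.span {z} := fun z => by
          rw [ofList_cons, sup_comm (Ideal.span {z}) (Ideal.ofList l₁), ← sup_assoc]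
        rw [hKa] at hb ⊢
        obtain ⟨w, hw, nc, hnc, hsum⟩ := Submodule.mem_sup.mp hb
        obtain ⟨c, rfl⟩ := Ideal.mem_span_singleton'.mp hnc
        -- hsum : w + c * a ^ (t+1) = e * b
        have hb' : e * b ∈ J ⊔ Ideal.ofList (a ^ t :: l₁) := by
          rw [hKa]
          have : e * b = w + (c * a) * a ^ t := by linear_combination -hsum
          rw [this]
          exact add_mem (Submodule.mem_sup_left hw)
            (Submodule.mem_sup_right (Ideal.mem_span_singleton'.mpr ⟨c * a, rfl⟩))
        have hstage' := wr_stage (a ^ t :: l₁) l₂ h' b hb'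
        rw [hKa] at hstage'
        obtain ⟨w', hw', nu, hnu, hsum'⟩ := Submodule.mem_sup.mp hstage'
        obtain ⟨u, rfl⟩ := Ideal.mem_span_singleton'.mp hnu
        -- hsum' : w' + u * a ^ t = b
        have key : a ^ t * (e * u - a * c) ∈ J ⊔ Ideal.ofList l₁ := by
          have : a ^ t * (e * u - a * c) = w - e * w' := by
            linear_combination e * hsum' - hsum
          rw [this]
          exact sub_mem hw ((J ⊔ Ideal.ofList l₁).mul_mem_left e hw')
        have hpre : WR J (a :: l₁) := wr_append_left (a :: l₁) (h : WR J ((a :: l₁) ++ e :: l₂))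
        have hcanc : e * u - a * c ∈ J ⊔ Ideal.ofList l₁ :=
          wr_cancel_head_pow a l₁ J hpre t _ key
        have heu : e * u ∈ J ⊔ Ideal.ofList (a :: l₁) := by
          rw [hKa]
          have : e * u = (e * u - a * c) + c * a := by ring
          rw [this]
          exact add_mem (Submodule.mem_sup_left hcanc)
            (Submodule.mem_sup_right (Ideal.mem_span_singleton'.mpr ⟨c, rfl⟩))
        have hu := wr_stage (a :: l₁) l₂ (h : WR J ((a :: l₁) ++ e :: l₂)) u heu
        rw [hKa] at hu
        obtain ⟨w'', hw'', nv, hnv, hsum''⟩ := Submodule.mem_sup.mp hu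
        obtain ⟨v, rfl⟩ := Ideal.mem_span_singleton'.mp hnv
        -- hsum'' : w'' + v * a = u
        have : b = (w' + w'' * a ^ t) + v * a ^ (t + 1) := by
          linear_combination -hsum' - (a ^ t) * hsum''
        rw [this]
        exact add_mem
          (Submodule.mem_sup_left (add_mem hw'
            ((J ⊔ Ideal.ofList l₁).mul_mem_right _ hw'')))
          (Submodule.mem_sup_right (Ideal.mem_span_singleton'.mpr ⟨v, rfl⟩))

lemma wr_main : ∀ (l : List B) (J : Ideal B), WR J l → ∀ (t : ℕ) (m : B),
    l.prod ^ t * m ∈ J ⊔ Ideal.ofList (l.map (· ^ (t + 1))) → m ∈ J ⊔ Ideal.ofList l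
  | [], J, _, t, m, hm => by simpa using hm
  | a :: l, J, h, t, m, hm => by
      have h' : WR (J ⊔ Ideal.span {a ^ (t + 1)}) l := (wr_head_pow h (t + 1)).tail
      have hm' : l.prod ^ t * (a ^ t * m) ∈
          (J ⊔ Ideal.span {a ^ (t + 1)}) ⊔ Ideal.ofList (l.map (· ^ (t + 1))) := by
        have e1 : l.prod ^ t * (a ^ t * m) = (a :: l).prod ^ t * m := by
          rw [List.prod_cons, mul_pow]; ring
        rw [e1]
        rwa [List.map_cons, ofList_cons, ← sup_assoc] at hm
      have hind := wr_main l (J ⊔ Ideal.span {a ^ (t + 1)}) h' t (a ^ t * m) hm'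
      rw [sup_right_comm] at hind
      obtain ⟨w, hw, nc, hnc, hsum⟩ := Submodule.mem_sup.mp hind
      obtain ⟨c, rfl⟩ := Ideal.mem_span_singleton'.mp hnc
      -- hsum : w + c * a ^ (t+1) = a ^ t * m
      have key : a ^ t * (m - a * c) ∈ J ⊔ Ideal.ofList l := by
        have : a ^ t * (m - a * c) = w := by linear_combination -hsum
        rw [this]; exact hw
      have hmc := wr_cancel_head_pow a l J h t _ key
      rw [ofList_cons, sup_comm (Ideal.span {a}) (Ideal.ofList l), ← sup_assoc]
      have : m = (m - a * c) + c * a := by ring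
      rw [this]
      exact add_mem (Submodule.mem_sup_left hmc)
        (Submodule.mem_sup_right (Ideal.mem_span_singleton'.mpr ⟨c, rfl⟩))

end PowProdAux


open PowProdAux

/-- If `x₁,…,x_d` is a regular sequence on an `R`-algebra `B`, then for every `t ≥ 1` the element
`(x₁⋯x_d)^{t−1}` does not lie in `(x₁^t,…,x_d^t)B`; i.e. the class `[1/(x₁⋯x_d)]` is nonzero
in the top local cohomology of `B`. -/
theorem pow_prod_not_mem_span_pows {R B : Type*} [CommRing R] [CommRing B] [Algebra R B]
    {d : ℕ} (x : Fin d → R)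
    (hreg : RingTheory.Sequence.IsRegular B (List.ofFn x))
    (t : ℕ) (ht : 1 ≤ t) :
    algebraMap R B ((∏ i, x i) ^ (t - 1)) ∉
      Ideal.span (Set.range fun i => algebraMap R B (x i ^ t)) := by
  intro hmem
  set φ : R →+* B := algebraMap R B with hφ
  set rs : List R := List.ofFn x with hrs
  set l : List B := rs.map φ with hldef
  have hlofn : l = List.ofFn (fun i => φ (x i)) := by
    rw [hldef, hrs, List.map_ofFn]; rfl
  -- Step 1: the image sequence is weakly regular relative to ⊥.
  have hWR : WR (⊥ : Ideal B) l := by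
    apply wr_of_stages
    intro l₁ e l₂ hl b hb
    have hi : l₁.length < rs.length := by
      have : l.length = l₁.length + (l₂.length + 1) := by rw [hl]; simp
      have h2 : l.length = rs.length := by rw [hldef, List.length_map]
      omega
    have hregi := hreg.toIsWeaklyRegular.regular_mod_prev l₁.length hi
    have himp := (isSMulRegular_quotient_iff_mem_of_smul_mem _ _).mp hregi
    have htake : (rs.take l₁.length).map φ = l₁ := by
      rw [List.map_take, ← hldef, hl, List.take_left]
    have hNs : (Ideal.ofList (rs.take l₁.length) • (⊤ : Submodule R B)) =
        (Ideal.ofList l₁).restrictScalars R := by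
      rw [Ideal.smul_top_eq_map, Ideal.map_ofList, htake]
    have hil : l₁.length < l.length := by
      rw [hldef, List.length_map]; exact hi
    have he : φ (rs[l₁.length]'hi) = e := by
      have h1 : l[l₁.length]'hil = φ (rs[l₁.length]'hi) :=
        List.getElem_map _
      rw [← h1]
      have h2 : l[l₁.length]'hil = (l₁ ++ e :: l₂)[l₁.length]'(by rw [← hl]; exact hil) := by
        congr 1
      rw [h2, List.getElem_append_right (le_refl _)]
      simp
    rw [bot_sup_eq] at hb ⊢
    have hsm : (rs[l₁.length]'hi) • b ∈
        (Ideal.ofList (rs.take l₁.length) • (⊤ : Submodule R B)) := by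
      rw [hNs, Submodule.restrictScalars_mem, Algebra.smul_def, ← hφ, he]
      exact hb
    have hbN := himp b hsm
    rw [hNs] at hbN
    exact hbN
  -- Step 2: 1 is not in the ideal generated by the sequence.
  have hone : (1 : B) ∉ Ideal.ofList l := by
    intro h1
    apply hreg.top_ne_smul
    rw [Ideal.smul_top_eq_map, Ideal.map_ofList, ← hφ, ← hldef,
      (Ideal.eq_top_iff_one _).mpr h1, Submodule.restrictScalars_top]
  -- Step 3: translate the membership hypothesis and conclude.
  have hprod : φ ((∏ i, x i) ^ (t - 1)) = l.prod ^ (t - 1) := by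
    rw [map_pow, hlofn, List.prod_ofFn, map_prod]
  have hspan : Ideal.span (Set.range fun i => φ (x i ^ t)) =
      Ideal.ofList (l.map (· ^ t)) := by
    have hmap : l.map (· ^ t) = List.ofFn (fun i => φ (x i) ^ t) := by
      rw [hlofn, List.map_ofFn]; rfl
    unfold Ideal.ofList
    congr 1
    ext b
    simp only [hmap, Set.mem_setOf_eq, List.mem_ofFn, Set.mem_range, map_pow]
  have ht' : t - 1 + 1 = t := by omega
  have hfin := wr_main l ⊥ hWR (t - 1) 1 ?_
  · rw [bot_sup_eq] at hfin
    exact hone hfin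
  · rw [ht', mul_one, bot_sup_eq, ← hspan, ← hprod]
    exact hmem
end

section
/- Let R → B be a homomorphism of commutative rings that is cyclically pure, i.e., IB ∩ R = I for every ideal I of R. If x₁,…,x_d ∈ R is a regular sequence on B, then x₁,…,x_d is a regular sequence on R. In particular, if (R,m) is a Noetherian local ring admitting a cyclically pure map to an R-algebra B on which some system of parameters of R is a regular sequence, then that system of parameters is a regular sequence on R. -/
/-- If `R → B` is cyclically pure (`IB ∩ R = I` for every ideal `I ⊆ R`) and `x₁,…,x_d ∈ R`
is a regular sequence on `B`, then it is a regular sequence on `R`. -/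
theorem isRegular_of_cyclically_pure {R B : Type*} [CommRing R] [CommRing B] [Algebra R B]
    (hpure : ∀ (I : Ideal R) (r : R), algebraMap R B r ∈ I.map (algebraMap R B) → r ∈ I)
    (xs : List R)
    (hreg : RingTheory.Sequence.IsRegular B xs) :
    RingTheory.Sequence.IsRegular R xs := by
  constructor
  · rw [RingTheory.Sequence.isWeaklyRegular_iff]
    intro i hi
    have hB := hreg.toIsWeaklyRegular.regular_mod_prev i hi
    set I : Ideal R := Ideal.ofList (xs.take i) with hI
    -- reduce injectivity to kernel triviality
    intro y z hyz
    obtain ⟨r, rfl⟩ := Submodule.Quotient.mk_surjective _ y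
    obtain ⟨s, rfl⟩ := Submodule.Quotient.mk_surjective _ z
    simp only at hyz
    rw [← Submodule.Quotient.mk_smul, ← Submodule.Quotient.mk_smul,
      Submodule.Quotient.eq] at hyz
    rw [Submodule.Quotient.eq]
    have hmem : xs[i] • r - xs[i] • s ∈ I := by
      have := hyz
      rwa [Ideal.smul_eq_mul, Ideal.mul_top] at this
    -- move to B
    have hBmem : xs[i] • (algebraMap R B (r - s)) ∈ (I • ⊤ : Submodule R B) := by
      rw [Ideal.smul_top_eq_map, Submodule.restrictScalars_mem]
      have : algebraMap R B (xs[i] • r - xs[i] • s) ∈ I.map (algebraMap R B) :=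
        Ideal.mem_map_of_mem _ hmem
      rw [smul_eq_mul, smul_eq_mul, ← mul_sub, map_mul, ← Algebra.smul_def,
        map_sub] at this
      rwa [map_sub]
    have h0 : xs[i] • (Submodule.Quotient.mk (p := (I • ⊤ : Submodule R B))
        (algebraMap R B (r - s))) = xs[i] • (0 : B ⧸ (I • ⊤ : Submodule R B)) := by
      rw [smul_zero, ← Submodule.Quotient.mk_smul, Submodule.Quotient.mk_eq_zero]
      exact hBmem
    have h1 := hB h0
    rw [Submodule.Quotient.mk_eq_zero, Ideal.smul_top_eq_map,
      Submodule.restrictScalars_mem] at h1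
    have := hpure I (r - s) h1
    rwa [Ideal.smul_eq_mul, Ideal.mul_top]
  · intro htop
    apply hreg.top_ne_smul
    have h1 : (1 : R) ∈ Ideal.ofList xs • (⊤ : Submodule R R) := htop ▸ Submodule.mem_top
    rw [Ideal.smul_eq_mul, Ideal.mul_top] at h1
    have : Ideal.ofList xs = (⊤ : Ideal R) := (Ideal.eq_top_iff_one _).mpr h1
    rw [this, Ideal.smul_top_eq_map, Ideal.map_top]
    rfl
end

section
/- Let (R, m, k) be a complete Noetherian local ring, E the injective hull of the residue field k, and B an R-algebra. If the natural map E → E ⊗_R B (given by e ↦ e ⊗ 1) is injective, then the structure map R → B is a split injection of R-modules; in particular R → B is pure. -/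
open IsLocalRing TensorProduct


universe u v

section Small
variable {R : Type u} [CommRing R] [IsLocalRing R] [IsNoetherianRing R]
variable {E : Type v} [AddCommGroup E] [Module R E]

theorem aux_small [IsHausdorff (maximalIdeal R) R]
    (ι : ResidueField R →ₗ[R] E) (hι : Function.Injective ι) : Small.{v} R := by
  have hk : Small.{v} (ResidueField R) := small_of_injective hι
  have hq : ∀ n : ℕ, Small.{v} (R ⧸ (maximalIdeal R ^ n : Ideal R)) := by
    intro n
    induction n with
    | zero =>
      have : Subsingleton (R ⧸ (maximalIdeal R ^ 0 : Ideal R)) := by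
        rw [pow_zero, Ideal.one_eq_top]
        infer_instance
      infer_instance
    | succ n ih =>
      obtain ⟨d, t, ht⟩ := Submodule.fg_iff_exists_fin_generating_family.mp
        (IsNoetherian.noetherian (maximalIdeal R ^ n))
      set I := maximalIdeal R ^ n with hI
      set J := maximalIdeal R ^ (n + 1) with hJ
      let f : (R ⧸ I) × (Fin d → ResidueField R) → R ⧸ J := fun p =>
        Ideal.Quotient.mk J (p.1.out + ∑ i, (p.2 i).out * t i)
      have hf : Function.Surjective f := by
        intro y
        obtain ⟨r, rfl⟩ := Ideal.Quotient.mk_surjective y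
        set q : R ⧸ I := Ideal.Quotient.mk I r with hq'
        have hmem : r - q.out ∈ I := by
          rw [← Ideal.Quotient.eq]
          exact (Quotient.out_eq q).symm
        have hmem2 : r - q.out ∈ Submodule.span R (Set.range t) := by rw [ht]; exact hmem
        obtain ⟨c, hc⟩ := (Submodule.mem_span_range_iff_exists_fun R).mp hmem2
        refine ⟨⟨q, fun i => residue R (c i)⟩, ?_⟩
        show Ideal.Quotient.mk J (q.out + ∑ i, (residue R (c i)).out * t i) = Ideal.Quotient.mk J r
        rw [Ideal.Quotient.eq]
        have h1 : r - q.out = ∑ i, c i * t i := by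
          rw [← hc]; simp [smul_eq_mul]
        have key : q.out + ∑ i, (residue R (c i)).out * t i - r
            = ∑ i, ((residue R (c i)).out - c i) * t i := by
          simp only [sub_mul, Finset.sum_sub_distrib]
          linear_combination -h1
        rw [key]
        refine Ideal.sum_mem _ fun i _ => ?_
        have h1 : (residue R (c i)).out - c i ∈ maximalIdeal R := by
          have h2 : Ideal.Quotient.mk (maximalIdeal R) ((residue R (c i)).out)
              = Ideal.Quotient.mk (maximalIdeal R) (c i) := Quotient.out_eq _
          exact Ideal.Quotient.eq.mp h2
        have h2 : t i ∈ I := by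
          rw [← ht]; exact Submodule.subset_span ⟨i, rfl⟩
        rw [hJ, pow_succ, mul_comm (maximalIdeal R ^ n) (maximalIdeal R)]
        exact Ideal.mul_mem_mul h1 h2
      exact small_of_surjective hf
  have : Small.{v} (∀ n : ℕ, R ⧸ (maximalIdeal R ^ n : Ideal R)) := inferInstance
  refine small_of_injective (f := fun r n => Ideal.Quotient.mk (maximalIdeal R ^ n) r) ?_
  intro r r' h
  have hz : r - r' = 0 := by
    refine IsHausdorff.haus ‹IsHausdorff (maximalIdeal R) R› _ fun n => ?_
    rw [SModEq.zero]
    have : (maximalIdeal R ^ n) • (⊤ : Submodule R R) = (maximalIdeal R ^ n : Ideal R) := by simp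
    rw [this]
    rw [← Ideal.Quotient.eq]
    exact congrFun h n
  exact sub_eq_zero.mp hz
end Small

section Main
variable {R : Type u} [CommRing R] [IsLocalRing R] [IsNoetherianRing R]
variable {E : Type v} [AddCommGroup E] [Module R E]

theorem aux_baer [IsHausdorff (maximalIdeal R) R] [Module.Injective R E]
    (ι : ResidueField R →ₗ[R] E) (hι : Function.Injective ι) : Module.Baer R E :=
  have := aux_small ι hι
  Module.Baer.of_injective ‹Module.Injective R E›

theorem aux_socle (ι : ResidueField R →ₗ[R] E) (hι : Function.Injective ι)
    (hess : ∀ N : Submodule R E, N ≠ ⊥ → N ⊓ LinearMap.range ι ≠ ⊥)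
    {x : E} (hx : ∀ a ∈ maximalIdeal R, a • x = 0) : x ∈ LinearMap.range ι := by
  by_cases h0 : x = 0
  · exact h0 ▸ (LinearMap.range ι).zero_mem
  have hN : Submodule.span R {x} ≠ ⊥ := by
    simpa [Submodule.span_singleton_eq_bot] using h0
  obtain ⟨y, hy, hy0⟩ := Submodule.ne_bot_iff _ |>.mp (hess _ hN)
  obtain ⟨hy1, c, hc⟩ := hy
  obtain ⟨a, ha⟩ := Submodule.mem_span_singleton.mp hy1
  have haM : a ∉ maximalIdeal R := fun h => hy0 (by rw [← ha, hx a h])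
  have hu : IsUnit a := by
    by_contra h
    exact haM ((IsLocalRing.mem_maximalIdeal a).mpr (mem_nonunits_iff.mpr h))
  obtain ⟨u, rfl⟩ := hu
  refine ⟨((u⁻¹ : Rˣ) : R) • c, ?_⟩
  rw [map_smul, hc, ← ha, smul_smul, Units.inv_mul, one_smul]

theorem aux_faithful (hb : Module.Baer R E)
    (ι : ResidueField R →ₗ[R] E) (hι : Function.Injective ι) (n : ℕ) (r : R)
    (h : ∀ x : E, (∀ a ∈ (maximalIdeal R ^ n : Ideal R), a • x = 0) → r • x = 0) :
    r ∈ (maximalIdeal R ^ n : Ideal R) := by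
  by_contra hr
  set J : Ideal R := (maximalIdeal R ^ n).colon (Submodule.span R {r}) with hJ
  have hJr : ∀ a : R, a ∈ J ↔ a * r ∈ (maximalIdeal R ^ n : Ideal R) := by
    intro a
    rw [hJ, Submodule.mem_colon_span_singleton, smul_eq_mul]
  have hJm : J ≤ maximalIdeal R := by
    apply IsLocalRing.le_maximalIdeal
    intro hT
    exact hr (by simpa using (hJr 1).mp (hT ▸ Submodule.mem_top))
  -- the injective map ρ : R/J → R/m^n, a ↦ a r
  have hle : J ≤ Submodule.comap (LinearMap.toSpanSingleton R R r)
      ((maximalIdeal R ^ n : Ideal R) : Submodule R R) := by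
    intro a ha
    simp only [Submodule.mem_comap, LinearMap.toSpanSingleton_apply, smul_eq_mul]
    exact (hJr a).mp ha
  set ρ : (R ⧸ J) →ₗ[R] R ⧸ (maximalIdeal R ^ n : Ideal R) :=
    Submodule.mapQ J _ (LinearMap.toSpanSingleton R R r) hle with hρ
  have hρ1 : ∀ a : R, ρ (Submodule.Quotient.mk a) = Submodule.Quotient.mk (a * r) := by
    intro a
    rw [hρ, Submodule.mapQ_apply, LinearMap.toSpanSingleton_apply, smul_eq_mul]
  have hρinj : Function.Injective ρ := by
    intro p q hpq
    obtain ⟨a, rfl⟩ := Submodule.Quotient.mk_surjective _ p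
    obtain ⟨b, rfl⟩ := Submodule.Quotient.mk_surjective _ q
    rw [hρ1, hρ1] at hpq
    rw [Submodule.Quotient.eq] at hpq ⊢
    rw [hJr]
    simpa [sub_mul] using hpq
  -- ν : R/J → E
  have hker : J ≤ LinearMap.ker (ι ∘ₗ (Submodule.mkQ (maximalIdeal R))) := by
    intro a ha
    rw [LinearMap.mem_ker]
    show ι (residue R a) = 0
    rw [(residue_eq_zero_iff a).mpr (hJm ha), map_zero]
  set ν : (R ⧸ J) →ₗ[R] E := Submodule.liftQ J (ι ∘ₗ (Submodule.mkQ (maximalIdeal R))) hker with hν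
  obtain ⟨w, hw⟩ := hb.extension_property ρ hρinj ν
  set x : E := w (Submodule.Quotient.mk 1) with hx
  have htors : ∀ a ∈ (maximalIdeal R ^ n : Ideal R), a • x = 0 := by
    intro a ha
    rw [hx, ← map_smul]
    rw [show a • (Submodule.Quotient.mk 1 : R ⧸ (maximalIdeal R ^ n : Ideal R))
        = Submodule.Quotient.mk a by rw [← Submodule.Quotient.mk_smul]; norm_num]
    rw [show (Submodule.Quotient.mk a : R ⧸ (maximalIdeal R ^ n : Ideal R)) = 0 from
      (Submodule.Quotient.mk_eq_zero _).mpr ha]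
    exact map_zero w
  have hrx : r • x = ι 1 := by
    rw [hx, ← map_smul]
    have h1 : r • (Submodule.Quotient.mk 1 : R ⧸ (maximalIdeal R ^ n : Ideal R))
        = ρ (Submodule.Quotient.mk 1) := by
      rw [hρ1, ← Submodule.Quotient.mk_smul]; norm_num
    rw [h1, ← LinearMap.comp_apply, hw, hν, Submodule.liftQ_apply]
    show ι (residue R 1) = ι 1
    congr 1
  have := h x htors
  rw [hrx] at this
  exact one_ne_zero (hι (this.trans (map_zero ι).symm))

end Main

section Scalar
variable {R : Type u} [CommRing R] [IsLocalRing R] [IsNoetherianRing R]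
variable {E : Type v} [AddCommGroup E] [Module R E]

def auxT (R : Type u) [CommRing R] [IsLocalRing R] (E : Type v) [AddCommGroup E] [Module R E]
    (n : ℕ) : Submodule R E :=
  Submodule.torsionBySet R E (↑(maximalIdeal R ^ n) : Set R)

theorem mem_auxT (n : ℕ) (x : E) :
    x ∈ auxT R E n ↔ ∀ a ∈ (maximalIdeal R ^ n : Ideal R), a • x = 0 := by
  constructor
  · intro h a ha
    exact (Submodule.mem_torsionBySet_iff _ x).mp h ⟨a, ha⟩
  · intro h
    exact (Submodule.mem_torsionBySet_iff ((maximalIdeal R ^ n : Ideal R) : Set R) x).mpr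
      fun a => h a a.2

theorem aux_scalar (ι : ResidueField R →ₗ[R] E) (hι : Function.Injective ι)
    (hess : ∀ N : Submodule R E, N ≠ ⊥ → N ⊓ LinearMap.range ι ≠ ⊥) (n : ℕ)
    (f : auxT R E n →ₗ[R] E) :
    ∃ r : R, ∀ (x : E) (hx : x ∈ auxT R E n), f ⟨x, hx⟩ = r • x := by
  revert f
  induction n with
  | zero =>
    intro f
    refine ⟨0, fun x hx => ?_⟩
    have hx0 : x = 0 := by
      have h1 : (1 : R) ∈ (maximalIdeal R ^ 0 : Ideal R) := by
        simp [pow_zero, Ideal.one_eq_top]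
      have := (mem_auxT 0 x).mp hx 1 h1
      simpa using this
    subst hx0
    rw [show (⟨(0 : E), hx⟩ : auxT R E 0) = 0 from rfl]
    simp
  | succ n ih =>
    intro f
    have hTle : auxT R E n ≤ auxT R E (n + 1) := by
      intro x hx
      rw [mem_auxT]
      intro a ha
      exact (mem_auxT n x).mp hx a (Ideal.pow_le_pow_right (Nat.le_succ n) ha)
    obtain ⟨r, hr⟩ := ih (f ∘ₗ Submodule.inclusion hTle)
    -- g kills Tn and lands in the socle
    set g : auxT R E (n + 1) →ₗ[R] E := f - r • (auxT R E (n + 1)).subtype with hg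
    have hg0 : ∀ y : auxT R E (n + 1), (y : E) ∈ auxT R E n → g y = 0 := by
      intro y hy
      have h1 : f y = r • (y : E) := hr (y : E) hy
      rw [hg]
      simp [h1]
    have hmem_smul : ∀ (a : R), a ∈ maximalIdeal R → ∀ y : auxT R E (n + 1),
        a • (y : E) ∈ auxT R E n := by
      intro a ha y
      rw [mem_auxT]
      intro b hb
      rw [smul_smul]
      refine (mem_auxT _ _).mp y.2 (b * a) ?_
      rw [pow_succ]
      exact Ideal.mul_mem_mul hb ha
    have hg_socle : ∀ y : auxT R E (n + 1), g y ∈ LinearMap.range ι := by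
      intro y
      refine aux_socle ι hι hess fun a ha => ?_
      have h1 : a • g y = g (a • y) := (map_smul g a y).symm
      rw [h1]
      apply hg0
      exact hmem_smul a ha y
    -- generators of m^n
    obtain ⟨d, t, ht⟩ := Submodule.fg_iff_exists_fin_generating_family.mp
      (IsNoetherian.noetherian (maximalIdeal R ^ n))
    have htmem : ∀ i, t i ∈ (maximalIdeal R ^ n : Ideal R) := fun i =>
      ht ▸ Submodule.subset_span ⟨i, rfl⟩
    set e : ResidueField R ≃ₗ[R] LinearMap.range ι := LinearEquiv.ofInjective ι hι with he
    have hecoe : ∀ c : ResidueField R, ((e c : LinearMap.range ι) : E) = ι c := fun c => rfl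
    -- t i • y lies in the socle
    have hts : ∀ (i : Fin d) (y : auxT R E (n + 1)), t i • (y : E) ∈ LinearMap.range ι := by
      intro i y
      refine aux_socle ι hι hess fun a ha => ?_
      rw [smul_smul]
      refine (mem_auxT _ _).mp y.2 (a * t i) ?_
      rw [pow_succ, mul_comm (maximalIdeal R ^ n) (maximalIdeal R)]
      exact Ideal.mul_mem_mul ha (htmem i)
    -- coordinate maps
    set cmap : Fin d → (auxT R E (n + 1) →ₗ[R] ResidueField R) := fun i =>
      e.symm.toLinearMap ∘ₗ LinearMap.codRestrict (LinearMap.range ι)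
        (t i • (auxT R E (n + 1)).subtype) (fun y => by simpa using hts i y) with hcmap
    have hcmap_spec : ∀ (i : Fin d) (y : auxT R E (n + 1)), ι (cmap i y) = t i • (y : E) := by
      intro i y
      rw [hcmap]
      simp only [LinearMap.comp_apply, LinearEquiv.coe_coe]
      rw [← hecoe (e.symm _), LinearEquiv.apply_symm_apply]
      rfl
    set Θ : auxT R E (n + 1) →ₗ[R] (Fin d → ResidueField R) := LinearMap.pi cmap with hΘ
    -- ḡ : T → k with ι ∘ ḡ = g
    set gbar : auxT R E (n + 1) →ₗ[R] ResidueField R :=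
      e.symm.toLinearMap ∘ₗ LinearMap.codRestrict (LinearMap.range ι) g hg_socle with hgbar
    have hgbar_spec : ∀ y : auxT R E (n + 1), ι (gbar y) = g y := by
      intro y
      rw [hgbar]
      simp only [LinearMap.comp_apply, LinearEquiv.coe_coe]
      rw [← hecoe (e.symm _), LinearEquiv.apply_symm_apply]
      rfl
    have hker : ∀ y : auxT R E (n + 1), Θ y = 0 → gbar y = 0 := by
      intro y hy
      have hyTn : (y : E) ∈ auxT R E n := by
        rw [mem_auxT]
        intro b hb
        show b • (y : E) = 0
        have hb' : b ∈ Submodule.span R (Set.range t) := by rw [ht]; exact hb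
        clear hb
        induction hb' using Submodule.span_induction with
        | mem z hz =>
          obtain ⟨i, rfl⟩ := hz
          have hz0 : cmap i y = 0 := by
            have := congrFun hy i
            simpa [hΘ] using this
          rw [← hcmap_spec i y, hz0, map_zero]
        | zero => simp
        | add b c _ _ ihb ihc => rw [add_smul, ihb, ihc, add_zero]
        | smul a b _ ihb => rw [smul_assoc, ihb, smul_zero]
      apply hι
      rw [hgbar_spec, map_zero, hg0 y hyTn]
    -- residue smul lemmas
    have hresmul : ∀ (a : R) (z : ResidueField R), residue R a • z = a • z := by
      intro a z
      show algebraMap R (ResidueField R) a • z = a • z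
      exact algebraMap_smul (ResidueField R) a z
    have hresmulP : ∀ (a : R) (w : Fin d → ResidueField R), residue R a • w = a • w := by
      intro a w
      show algebraMap R (ResidueField R) a • w = a • w
      exact algebraMap_smul (ResidueField R) a w
    -- the image of Θ as a k-subspace
    set W : Submodule (ResidueField R) (Fin d → ResidueField R) :=
      { carrier := Set.range Θ
        add_mem' := by rintro w₁ w₂ ⟨y₁, rfl⟩ ⟨y₂, rfl⟩; exact ⟨y₁ + y₂, map_add Θ y₁ y₂⟩
        zero_mem' := ⟨0, map_zero Θ⟩
        smul_mem' := by
          rintro c w ⟨y, rfl⟩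
          obtain ⟨a, rfl⟩ := Ideal.Quotient.mk_surjective c
          refine ⟨a • y, ?_⟩
          rw [map_smul, ← hresmulP a (Θ y)]
          rfl } with hW
    have hWsur : ∀ w : W, ∃ y : auxT R E (n + 1), Θ y = (w : Fin d → ResidueField R) := fun w => w.2
    choose sec hsec using hWsur
    have hwd : ∀ (w : W) (y : auxT R E (n + 1)), Θ y = (w : Fin d → ResidueField R) → gbar y = gbar (sec w) := by
      intro w y hy
      have h0 : Θ (y - sec w) = 0 := by rw [map_sub, hy, hsec w, sub_self]
      have h1 := hker _ h0
      rw [map_sub] at h1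
      exact sub_eq_zero.mp h1
    set lam : W →ₗ[ResidueField R] ResidueField R :=
      { toFun := fun w => gbar (sec w)
        map_add' := fun w₁ w₂ => by
          have h := hwd (w₁ + w₂) (sec w₁ + sec w₂)
            (by rw [map_add, hsec w₁, hsec w₂]; rfl)
          show gbar (sec (w₁ + w₂)) = gbar (sec w₁) + gbar (sec w₂)
          rw [← h, map_add]
        map_smul' := fun c w => by
          obtain ⟨a, rfl⟩ := residue_surjective c
          have h := hwd ((residue R a) • w) (a • sec w)
            (by
              rw [map_smul, hsec w, Submodule.coe_smul]
              exact (hresmulP a (w : Fin d → ResidueField R)).symm)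
          dsimp only [RingHom.id_apply]
          rw [← h, map_smul]
          exact (hresmul a (gbar (sec w))).symm } with hlam
    obtain ⟨Lam, hLam⟩ := LinearMap.exists_extend lam
    choose aa haa using fun i : Fin d =>
      residue_surjective (Lam (Pi.single i (1 : ResidueField R)))
    refine ⟨r + ∑ i, aa i * t i, ?_⟩
    intro x hx
    set y : auxT R E (n + 1) := ⟨x, hx⟩ with hy
    have hfy : f y = g y + r • x := by
      rw [hg]
      simp only [LinearMap.sub_apply, LinearMap.smul_apply, Submodule.coe_subtype]
      show f y = f y - r • x + r • x
      abel
    have hgy : g y = (∑ i, aa i * t i) • x := by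
      have hWy : (Θ y : Fin d → ResidueField R) ∈ W := ⟨y, rfl⟩
      have h1 : gbar y = lam ⟨Θ y, hWy⟩ := hwd ⟨Θ y, hWy⟩ y rfl
      have h2 : lam ⟨Θ y, hWy⟩ = Lam (Θ y) := by
        have := LinearMap.congr_fun hLam ⟨Θ y, hWy⟩
        exact this.symm
      have h3 : Lam (Θ y) = ∑ i, Θ y i * Lam (Pi.single i 1) := by
        conv_lhs => rw [← Finset.univ_sum_single (Θ y)]
        rw [map_sum]
        congr 1
        ext i
        have h35 : Pi.single i (Θ y i)
            = Θ y i • (Pi.single i (1 : ResidueField R) : Fin d → ResidueField R) := by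
          rw [← Pi.single_smul, smul_eq_mul, mul_one]
        rw [h35, map_smul, smul_eq_mul]
      have h4 : g y = ι (∑ i, Θ y i * Lam (Pi.single i 1)) := by
        rw [← h3, ← h2, ← h1, hgbar_spec]
      rw [h4, map_sum, Finset.sum_smul]
      refine Finset.sum_congr rfl fun i _ => ?_
      have h5 : Θ y i * Lam (Pi.single i 1) = aa i • (Θ y i) := by
        rw [← haa i, mul_comm, ← smul_eq_mul]
        show residue R (aa i) • Θ y i = aa i • Θ y i
        exact hresmul _ _
      rw [h5, map_smul]
      have h6 : ι (Θ y i) = t i • x := hcmap_spec i y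
      rw [h6, smul_smul]
    show f y = (r + ∑ i, aa i * t i) • x
    rw [hfy, hgy, add_smul]
    abel
end Scalar


theorem auxT_mono {R : Type u} [CommRing R] [IsLocalRing R] [IsNoetherianRing R] {E : Type v} [AddCommGroup E]
    [Module R E] {m n : ℕ} (h : m ≤ n) : auxT R E m ≤ auxT R E n := by
  intro x hx
  rw [mem_auxT]
  intro a ha
  exact (mem_auxT m x).mp hx a (Ideal.pow_le_pow_right h ha)


/-- Over a complete Noetherian local ring `(R, m, k)` with `E` the injective hull of `k` and
`B` an `R`-algebra, if `E → E ⊗_R B`, `e ↦ e ⊗ 1`, is injective then `R → B` splits as a map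
of `R`-modules. -/
theorem splits_of_injective_hull_tensor_injective
    {R : Type*} [CommRing R] [IsLocalRing R] [IsNoetherianRing R]
    [IsAdicComplete (maximalIdeal R) R]
    {E : Type*} [AddCommGroup E] [Module R E] [Module.Injective R E]
    (ι : ResidueField R →ₗ[R] E) (hι : Function.Injective ι)
    (hess : ∀ N : Submodule R E, N ≠ ⊥ → N ⊓ LinearMap.range ι ≠ ⊥)
    {B : Type*} [CommRing B] [Algebra R B]
    (hinj : Function.Injective ((TensorProduct.mk R E B).flip 1)) :
    ∃ s : B →ₗ[R] R, s ∘ₗ Algebra.linearMap R B = LinearMap.id := by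
  have hb : Module.Baer R E := aux_baer ι hι
  obtain ⟨g, hgE⟩ := hb.extension_property ((TensorProduct.mk R E B).flip 1) hinj LinearMap.id
  set ψ : B → (E →ₗ[R] E) := fun b => g ∘ₗ ((TensorProduct.mk R E B).flip b) with hψ
  have hψapp : ∀ (b : B) (e : E), ψ b e = g (e ⊗ₜ[R] b) := fun b e => rfl
  have hψ1 : ∀ e : E, ψ 1 e = e := fun e => LinearMap.congr_fun hgE e
  have hψadd : ∀ (b b' : B) (e : E), ψ (b + b') e = ψ b e + ψ b' e := by
    intro b b' e
    rw [hψapp, hψapp, hψapp, TensorProduct.tmul_add, map_add]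
  have hψsmul : ∀ (a : R) (b : B) (e : E), ψ (a • b) e = a • ψ b e := by
    intro a b e
    rw [hψapp, hψapp, TensorProduct.tmul_smul, map_smul]
  have hψalg : ∀ (a : R) (e : E), ψ (algebraMap R B a) e = a • e := by
    intro a e
    rw [Algebra.algebraMap_eq_smul_one, hψsmul, hψ1]
  -- scalar representatives on each torsion layer
  have hchoice : ∀ (b : B) (n : ℕ), ∃ r : R, ∀ x ∈ auxT R E n, ψ b x = r • x := by
    intro b n
    obtain ⟨r, hr⟩ := aux_scalar ι hι hess n ((ψ b) ∘ₗ (auxT R E n).subtype)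
    exact ⟨r, fun x hx => hr x hx⟩
  choose rr hrr using hchoice
  have hst : ∀ n : ℕ, (maximalIdeal R ^ n) • (⊤ : Submodule R R)
      = (maximalIdeal R ^ n : Ideal R) := fun n => by simp
  -- uniqueness of global representatives
  have hU : ∀ (b : B) (r r' : R), (∀ n, ∀ x ∈ auxT R E n, ψ b x = r • x) →
      (∀ n, ∀ x ∈ auxT R E n, ψ b x = r' • x) → r = r' := by
    intro b r r' h1 h2
    have hz : r - r' = 0 := by
      refine IsHausdorff.haus (inferInstance : IsHausdorff (maximalIdeal R) R) _ fun n => ?_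
      rw [SModEq.zero, hst n]
      refine aux_faithful hb ι hι n (r - r') fun x hx => ?_
      have hxT : x ∈ auxT R E n := (mem_auxT n x).mpr hx
      rw [sub_smul, ← h1 n x hxT, ← h2 n x hxT, sub_self]
    exact sub_eq_zero.mp hz
  -- coherence and limits
  have hcoh : ∀ b : B, ∃ L : R, ∀ n, rr b n ≡ L [SMOD
      (maximalIdeal R ^ n) • (⊤ : Submodule R R)] := by
    intro b
    refine IsPrecomplete.prec (inferInstance : IsPrecomplete (maximalIdeal R) R) ?_
    intro m n hmn
    rw [SModEq.sub_mem, hst m]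
    refine aux_faithful hb ι hι m (rr b m - rr b n) fun x hx => ?_
    have hxm : x ∈ auxT R E m := (mem_auxT m x).mpr hx
    have hxn : x ∈ auxT R E n := auxT_mono hmn hxm
    rw [sub_smul, ← hrr b m x hxm, ← hrr b n x hxn, sub_self]
  choose s0 hs0 using hcoh
  -- the global property
  have hP : ∀ (b : B) (n : ℕ), ∀ x ∈ auxT R E n, ψ b x = s0 b • x := by
    intro b n x hx
    have hmem : s0 b - rr b n ∈ (maximalIdeal R ^ n : Ideal R) := by
      have := (hs0 b n).symm
      rw [SModEq.sub_mem, hst n] at this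
      exact this
    have h0 : (s0 b - rr b n) • x = 0 := (mem_auxT n x).mp hx _ hmem
    have : s0 b • x = rr b n • x := by
      have := sub_smul (s0 b) (rr b n) x
      rw [h0] at this
      exact (sub_eq_zero.mp this.symm)
    rw [this, ← hrr b n x hx]
  -- linearity
  have hadd : ∀ b b' : B, s0 (b + b') = s0 b + s0 b' := by
    intro b b'
    refine hU (b + b') _ _ (hP (b + b')) fun n x hx => ?_
    rw [hψadd, hP b n x hx, hP b' n x hx, add_smul]
  have hsmul : ∀ (a : R) (b : B), s0 (a • b) = a • s0 b := by
    intro a b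
    refine hU (a • b) _ _ (hP (a • b)) fun n x hx => ?_
    rw [hψsmul, hP b n x hx, smul_smul, smul_eq_mul]
  have halg : ∀ a : R, s0 (algebraMap R B a) = a := by
    intro a
    refine hU (algebraMap R B a) _ _ (hP (algebraMap R B a)) fun n x hx => ?_
    rw [hψalg]
  refine ⟨{ toFun := s0, map_add' := hadd, map_smul' := hsmul }, ?_⟩
  refine LinearMap.ext fun a => ?_
  simpa using halg a
end
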